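/- Let q = 2^m and X ∈ F_{q^3}, written X = x + yα + zα^q with x, y, z ∈ F_q, where α ∈ F_{q^3} has Tr(α) = 0 and {1, α, α^q} a basis. Then Tr(X^{q²+q+2}) = x⁴ + x²(y² + z² + yz)·Tr(α^{q+1}) + x·Tr((yα + zα^q)³), where Tr = Tr_{F_{q^3}/F_q}. -/

import Mathlib

theorem stmt_7 (m : ℕ) (hm : 0 < m) (q : ℕ) (hq : q = 2 ^ m)
    (F E : Type*) [Field F] [Fintype F] [Field E] [Fintype E] [Algebra F E]
    (hF : Fintype.card F = q) (hE : Fintype.card E = q ^ 3)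
    (Tr : E → E) (hTr : ∀ X, Tr X = X + X ^ q + X ^ q ^ 2)
    (α : E) (hα0 : α ≠ 0) (hαtr : Tr α = 0)
    (hb : ∃ b : Module.Basis (Fin 3) F E, b 0 = 1 ∧ b 1 = α ∧ b 2 = α ^ q) :
    ∀ x y z : F,
      Tr ((algebraMap F E x + algebraMap F E y * α + algebraMap F E z * α ^ q) ^ (q ^ 2 + q + 2)) =
        (algebraMap F E x) ^ 4 +
          (algebraMap F E x) ^ 2 *
            (algebraMap F E (y ^ 2 + z ^ 2 + y * z) * Tr (α ^ (q + 1))) +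
          algebraMap F E x * Tr ((algebraMap F E y * α + algebraMap F E z * α ^ q) ^ 3) := by
  intro x y z
  -- characteristic 2
  have hcharE : CharP E 2 := by
    obtain ⟨p, hp⟩ := CharP.exists E
    haveI := hp
    haveI hpp : Fact p.Prime := ⟨CharP.char_is_prime E p⟩
    obtain ⟨n, hcard⟩ := FiniteField.card E p
    have hp2 : p = 2 := by
      have hdvd : p ∣ 2 ^ (3 * m) := by
        have : (p : ℕ) ^ (n : ℕ) = 2 ^ (3 * m) := by
          rw [← hcard.2, hE, hq, ← pow_mul, mul_comm]
        refine this ▸ dvd_pow_self p ?_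
        exact n.2.ne'
      exact (Nat.prime_dvd_prime_iff_eq hpp.out Nat.prime_two).mp
        (hpp.out.dvd_of_dvd_pow hdvd)
    rwa [hp2] at hp
  haveI := hcharE
  have htwo : (2 : E) = 0 := by
    have := CharP.cast_eq_zero E 2
    exact_mod_cast this
  haveI : Fact (Nat.Prime 2) := ⟨Nat.prime_two⟩
  have hfrob : ∀ s t : E, (s + t) ^ q = s ^ q + t ^ q := by
    intro s t; rw [hq]; exact add_pow_char_pow s t 2 m
  have hfix : ∀ t : F, (algebraMap F E t) ^ q = algebraMap F E t := by
    intro t; rw [← map_pow, ← hF, FiniteField.pow_card]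
  have hp2 : ∀ t : E, t ^ q ^ 2 = (t ^ q) ^ q := by
    intro t; rw [← pow_mul, pow_two]
  have hsq : ∀ t : E, (t ^ 2) ^ q = (t ^ q) ^ 2 := by
    intro t; rw [← pow_mul, ← pow_mul, mul_comm]
  have hcu : ∀ t : E, (t ^ 3) ^ q = (t ^ q) ^ 3 := by
    intro t; rw [← pow_mul, ← pow_mul, mul_comm]
  set ex := algebraMap F E x with hex
  set ey := algebraMap F E y with hey
  set ez := algebraMap F E z with hez
  set bb := α ^ q with hbdef
  -- trace relation : bb ^ q = α + bb
  have hba : bb ^ q = α + bb := by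
    have h := hTr α
    rw [hαtr] at h
    have h2 : bb ^ q = α ^ q ^ 2 := by rw [hbdef, ← pow_mul, ← pow_two]
    rw [h2]
    linear_combination -h - hbdef - (α + bb) * htwo
  -- Frobenius on the basic combinations
  have hPq : (ex + ey * α + ez * bb) ^ q = ex + (ez * α + (ey + ez) * bb) := by
    simp only [hex, hey, hez, hfrob, mul_pow, hfix, hba, ← hbdef]
    ring
  have hP'q : (ex + (ey * α + ez * bb)) ^ q = ex + (ez * α + (ey + ez) * bb) := by
    simp only [hex, hey, hez, hfrob, mul_pow, hfix, hba, ← hbdef]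
    ring
  have hX1q : (ex + (ez * α + (ey + ez) * bb)) ^ q = ex + ((ey + ez) * α + ey * bb) := by
    simp only [hex, hey, hez, hfrob, mul_pow, hfix, hba, ← hbdef]
    linear_combination ez * bb * htwo
  have hX2q : (ex + ((ey + ez) * α + ey * bb)) ^ q = ex + (ey * α + ez * bb) := by
    simp only [hex, hey, hez, hfrob, mul_pow, hfix, hba, ← hbdef]
    linear_combination ey * bb * htwo
  have hA0q : (ey * α + ez * bb) ^ q = ez * α + (ey + ez) * bb := by
    simp only [hex, hey, hez, hfrob, mul_pow, hfix, hba, ← hbdef]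
    ring
  have hA1q : (ez * α + (ey + ez) * bb) ^ q = (ey + ez) * α + ey * bb := by
    simp only [hex, hey, hez, hfrob, mul_pow, hfix, hba, ← hbdef]
    linear_combination ez * bb * htwo
  -- the big power
  have h1 : (ex + ey * α + ez * bb) ^ (q ^ 2 + q + 2) =
      ((ex + ey * α + ez * bb) ^ 2 * ((ex + ey * α + ez * bb) ^ q)) *
        (((ex + ey * α + ez * bb) ^ q) ^ q) := by
    rw [pow_add, pow_add, hp2]; ring
  have hatr : α ^ (q + 1) = bb * α := by
    rw [pow_succ, ← hbdef, mul_comm]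
  have hbaq : (bb * α) ^ q = (α + bb) * bb := by
    rw [mul_pow, hba, ← hbdef]
  have hbaq2 : ((α + bb) * bb) ^ q = (bb + (α + bb)) * (α + bb) := by
    rw [mul_pow, hfrob, hba, ← hbdef]
  simp only [hTr, hp2, h1, hatr, map_add, map_mul, map_pow, ← hex, ← hey, ← hez]
  rw [hPq, hX1q]
  have hV1 : ((ex + ey * α + ez * bb) ^ 2 * (ex + (ez * α + (ey + ez) * bb)) *
      (ex + ((ey + ez) * α + ey * bb))) ^ q =
      (ex + (ez * α + (ey + ez) * bb)) ^ 2 * (ex + ((ey + ez) * α + ey * bb)) *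
        (ex + (ey * α + ez * bb)) := by
    rw [mul_pow, mul_pow, hsq, hPq, hX1q, hX2q]
  have hV2 : ((ex + (ez * α + (ey + ez) * bb)) ^ 2 * (ex + ((ey + ez) * α + ey * bb)) *
      (ex + (ey * α + ez * bb))) ^ q =
      (ex + ((ey + ez) * α + ey * bb)) ^ 2 * (ex + (ey * α + ez * bb)) *
        (ex + (ez * α + (ey + ez) * bb)) := by
    rw [mul_pow, mul_pow, hsq, hX1q, hX2q, hP'q]
  rw [hV1, hV2, hbaq, hbaq2, hcu, hA0q, hcu, hA1q]
  linear_combination ((1)*ez*ez*ez*ez*α*bb*bb*bb + (2)*ez*ez*ez*ez*α*α*bb*bb + (1)*ez*ez*ez*ez*α*α*α*bb + (1)*ey*ez*ez*ez*bb*bb*bb*bb + (5)*ey*ez*ez*ez*α*bb*bb*bb + (7)*ey*ez*ez*ez*α*α*bb*bb + (4)*ey*ez*ez*ez*α*α*α*bb + (1)*ey*ez*ez*ez*α*α*α*α + (2)*ey*ey*ez*ez*bb*bb*bb*bb + (7)*ey*ey*ez*ez*α*bb*bb*bb + (10)*ey*ey*ez*ez*α*α*bb*bb + (7)*ey*ey*ez*ez*α*α*α*bb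 + (2)*ey*ey*ez*ez*α*α*α*α + (1)*ey*ey*ey*ez*bb*bb*bb*bb + (4)*ey*ey*ey*ez*α*bb*bb*bb + (7)*ey*ey*ey*ez*α*α*bb*bb + (5)*ey*ey*ey*ez*α*α*α*bb + (1)*ey*ey*ey*ez*α*α*α*α + (1)*ey*ey*ey*ey*α*bb*bb*bb + (2)*ey*ey*ey*ey*α*α*bb*bb + (1)*ey*ey*ey*ey*α*α*α*bb + (4)*ex*ez*ez*ez*α*bb*bb + (4)*ex*ez*ez*ez*α*α*bb + (4)*ex*ey*ez*ez*bb*bb*bb + (12)*ex*ey*ez*ez*α*bb*bb + (12)*ex*ey*ez*ez*α*α*bb + (4)*ex*ey*ez*ez*α*α*α + (4)*ex*ey*ey*ez*bb*bb*bb + (12)*ex*ey*ey*ez*α*bb*bb + (12)*ex*ey*ey*ez*α*α*bb + (4)*ex*ey*ey*ez*α*α*α + (4)*ex*ey*ey*ey*α*bb*bb + (4)*ex*ey*ey*ey*α*α*bb + (2)*ex*ex*ez*ez*bb*bb + (6)*ex*ex*ez*ez*α*bb + (3)*ex*ex*ez*ez*α*α + (7)*ex*ex*ey*ez*bb*bb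 + (13)*ex*ex*ey*ez*α*bb + (8)*ex*ex*ey*ez*α*α + (2)*ex*ex*ey*ey*bb*bb + (6)*ex*ex*ey*ey*α*bb + (3)*ex*ex*ey*ey*α*α + (4)*ex*ex*ex*ez*bb + (4)*ex*ex*ex*ez*α + (4)*ex*ex*ex*ey*bb + (4)*ex*ex*ex*ey*α + (1)*ex*ex*ex*ex) * htwo
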